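/- arXiv:cs/0106041 — 2 statements merged into one kernel-verified Lean document; each statement's English description precedes it below -/
import Mathlib

section
/- Let G be a finite simple graph obtained from H by contracting an edge e = {u,v} of H, and let c be a Hamiltonian cycle of G such that, at the merged vertex, c uses exactly one edge arising from a u-edge of H and exactly one edge arising from a v-edge of H. Then inserting e back yields a Hamiltonian cycle of H. -/
/-- The graph obtained from `H` by contracting the edge `{u, v}`. -/
def SimpleGraph.contractEdge {V : Type*} (H : SimpleGraph V) (u v : V) :
    SimpleGraph {z : V // z ≠ v} :=
  SimpleGraph.fromRel (fun a b => H.Adj ↑a ↑b ∨ (↑a = u ∧ H.Adj v ↑b))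

/-- The quotient map identifying `v` with `u`. -/
def contractMap {V : Type*} [DecidableEq V] (u v : V) (huv : u ≠ v) :
    V → {z : V // z ≠ v} :=
  fun z => if h : z = v then ⟨u, huv⟩ else ⟨z, h⟩

open SimpleGraph Walk in
/-- Lift a walk of the contraction avoiding the merged vertex to a walk of `H`. -/
private lemma lift_walk {V : Type*} {H : SimpleGraph V} {u v : V}
    {a b : {z : V // z ≠ v}} (p : (H.contractEdge u v).Walk a b)
    (hp : ∀ s ∈ p.support, (s : V) ≠ u) :
    ∃ q : H.Walk (a : V) (b : V), q.support = p.support.map Subtype.val ∧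
      q.edges = p.edges.map (Sym2.map Subtype.val) := by
  induction p with
  | nil => exact ⟨Walk.nil, by simp, by simp⟩
  | @cons a x b h p ih =>
    have ha : (a : V) ≠ u := hp a (by simp)
    have hx : (x : V) ≠ u := hp x (by simp)
    have hadj : H.Adj (a : V) (x : V) := by
      rw [SimpleGraph.contractEdge, SimpleGraph.fromRel_adj] at h
      rcases h.2 with (h' | ⟨h', _⟩) | (h' | ⟨h', _⟩)
      · exact h'
      · exact absurd h' ha
      · exact h'.symm
      · exact absurd h' hx
    obtain ⟨q, hq1, hq2⟩ := ih (fun s hs => hp s (by simp [hs]))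
    exact ⟨Walk.cons hadj q, by simp [hq1], by simp [hq2]⟩

open SimpleGraph Walk in
private lemma main_aux {V : Type*} [Fintype V]
    [DecidableEq V] (H : SimpleGraph V)
    (u v : V) (he : H.Adj u v) (w : {z : V // z ≠ v}) (hwu : (w : V) = u)
    (c : (H.contractEdge u v).Walk w w)
    (hc : c.IsHamiltonianCycle)
    (z₁ z₂ : {z : V // z ≠ v}) (hz : z₁ ≠ z₂)
    (hz₁ : H.Adj u ↑z₁) (hz₂ : H.Adj v ↑z₂)
    (hsplit : (c.edges.filter (fun e' => w ∈ e')).Perm [s(w, z₁), s(w, z₂)]) :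
    ∃ cH : H.Walk u u, cH.IsHamiltonianCycle ∧ s(u, v) ∈ cH.edges ∧
      ((cH.edges.erase s(u, v)).map (Sym2.map (contractMap u v he.ne))).Perm c.edges := by
  classical
  have hcnil : ¬ c.Nil := fun h => hc.isCycle.ne_nil h.eq_nil
  obtain ⟨x, hadj, q, hceq⟩ := SimpleGraph.Walk.not_nil_iff.mp hcnil
  subst hceq
  have hxw : x ≠ w := hadj.ne'
  obtain ⟨y, hadj', r, hqr⟩ := SimpleGraph.Walk.not_nil_iff.mp
    (SimpleGraph.Walk.not_nil_of_ne (fun h : w = x => hxw h.symm) (p := q.reverse))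
  obtain ⟨q', hq'⟩ : ∃ q' : (H.contractEdge u v).Walk x y,
      q = q'.append (Walk.cons hadj'.symm Walk.nil) :=
    ⟨r.reverse, by rw [← q.reverse_reverse, hqr, SimpleGraph.Walk.reverse_cons]⟩
  subst hq'
  have hyw : y ≠ w := hadj'.ne'
  have hedges : (Walk.cons hadj (q'.append (Walk.cons hadj'.symm Walk.nil))).edges
      = s(w, x) :: (q'.edges ++ [s(y, w)]) := by
    simp [SimpleGraph.Walk.edges_append]
  have hcount : ∀ a, (q'.support ++ [w]).count a = 1 := by
    have h2 := (SimpleGraph.Walk.isHamiltonianCycle_iff_isCycle_and_support_count_tail_eq_one.mp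
      hc).2
    intro a
    have h3 := h2 a
    rw [SimpleGraph.Walk.support_cons, List.tail_cons, SimpleGraph.Walk.support_append,
      SimpleGraph.Walk.support_cons, SimpleGraph.Walk.support_nil, List.tail_cons] at h3
    convert h3
  have hwq' : w ∉ q'.support := by
    have h1 := hcount w
    rw [List.count_append] at h1
    simp only [List.count_cons_self, List.count_nil, Nat.zero_add] at h1
    refine List.count_eq_zero.mp ?_
    omega
  have hcnt : ∀ a : {z : V // z ≠ v}, a ≠ w → q'.support.count a = 1 := by
    intro a ha
    have h1 := hcount a
    rw [List.count_append] at h1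
    have hva : (w : V) ≠ ↑a := fun h => ha (Subtype.ext h).symm
    simpa [List.count_cons, ha, hva] using h1
  -- compute the filtered list of edges at `w`
  have hfil : ((Walk.cons hadj (q'.append (Walk.cons hadj'.symm Walk.nil))).edges.filter
      (fun e' => w ∈ e')) = [s(w, x), s(y, w)] := by
    rw [hedges, List.filter_cons, List.filter_append]
    have h1 : q'.edges.filter (fun e' => w ∈ e') = [] := by
      refine List.filter_eq_nil_iff.mpr ?_
      intro e hmem hcontra
      obtain ⟨t, rfl⟩ := Sym2.mem_iff_exists.mp (by simpa using hcontra)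
      exact hwq' (q'.fst_mem_support_of_mem_edges hmem)
    rw [h1]
    simp
  have hsplit' : [s(w, x), s(w, y)].Perm [s(w, z₁), s(w, z₂)] := by
    rw [hfil] at hsplit
    rwa [show s(y, w) = s(w, y) from Sym2.eq_swap] at hsplit
  have hx : x = z₁ ∨ x = z₂ := by
    have hmem : s(w, x) ∈ [s(w, z₁), s(w, z₂)] := hsplit'.subset (by simp)
    simp only [List.mem_cons, List.not_mem_nil, or_false] at hmem
    rcases hmem with h | h
    · exact Or.inl (Sym2.congr_right.mp h)
    · exact Or.inr (Sym2.congr_right.mp h)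
  have hy : y = z₁ ∨ y = z₂ := by
    have hmem : s(w, y) ∈ [s(w, z₁), s(w, z₂)] := hsplit'.subset (by simp)
    simp only [List.mem_cons, List.not_mem_nil, or_false] at hmem
    rcases hmem with h | h
    · exact Or.inl (Sym2.congr_right.mp h)
    · exact Or.inr (Sym2.congr_right.mp h)
  have hxy : (x = z₁ ∧ y = z₂) ∨ (x = z₂ ∧ y = z₁) := by
    rcases hx with h1 | h1
    · rcases hy with h2 | h2
      · exfalso
        have hcnt2 := hsplit'.count_eq s(w, z₂)
        have hne1 : s(w, z₂) ≠ s(w, x) :=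
          fun h => hz ((Sym2.congr_right.mp h).trans h1).symm
        have hne2 : s(w, z₂) ≠ s(w, y) :=
          fun h => hz ((Sym2.congr_right.mp h).trans h2).symm
        have hne3 : s(w, z₂) ≠ s(w, z₁) :=
          fun h => hz (Sym2.congr_right.mp h).symm
        simp [List.count_cons, hne1, hne2, hne3] at hcnt2
        subst h1 h2
        split_ifs at hcnt2 <;> simp_all
      · exact Or.inl ⟨h1, h2⟩
    · rcases hy with h2 | h2
      · exact Or.inr ⟨h1, h2⟩
      · exfalso
        have hcnt2 := hsplit'.count_eq s(w, z₁)
        have hne1 : s(w, z₁) ≠ s(w, x) :=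
          fun h => hz ((Sym2.congr_right.mp h).trans h1)
        have hne2 : s(w, z₁) ≠ s(w, y) :=
          fun h => hz ((Sym2.congr_right.mp h).trans h2)
        have hne3 : s(w, z₁) ≠ s(w, z₂) :=
          fun h => hz (Sym2.congr_right.mp h)
        simp [List.count_cons, hne1, hne2, hne3] at hcnt2
        subst h1 h2
        split_ifs at hcnt2 <;> simp_all
  -- get a path from z₁ to z₂ inside the cycle, avoiding w
  have key : ∃ p0 : (H.contractEdge u v).Walk z₁ z₂,
      (∀ a, p0.support.count a = q'.support.count a) ∧
      (s(w, z₁) :: (p0.edges ++ [s(z₂, w)])).Perm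
        (Walk.cons hadj (q'.append (Walk.cons hadj'.symm Walk.nil))).edges := by
    rw [hedges]
    rcases hxy with ⟨rfl, rfl⟩ | ⟨rfl, rfl⟩
    · exact ⟨q', fun a => rfl, List.Perm.refl _⟩
    · refine ⟨q'.reverse, fun a => by simp [SimpleGraph.Walk.support_reverse], ?_⟩
      rw [show s(x, w) = s(w, x) from Sym2.eq_swap,
        show s(y, w) = s(w, y) from Sym2.eq_swap]
      rw [List.perm_iff_count]
      intro e
      simp only [List.count_cons, List.count_append, SimpleGraph.Walk.edges_reverse,
        List.count_reverse, List.count_nil]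
      split_ifs <;> omega
  obtain ⟨p0, hp0cnt, hp0perm⟩ := key
  have hwp0 : w ∉ p0.support := by
    refine List.count_eq_zero.mp ?_
    rw [hp0cnt]
    exact List.count_eq_zero.mpr hwq'
  have hvalu : ∀ s ∈ p0.support, (s : V) ≠ u := by
    intro s hs h
    exact hwp0 ((Subtype.ext (h.trans hwu.symm) : s = w) ▸ hs)
  obtain ⟨pH, hpsup, hpedg⟩ := lift_walk p0 hvalu
  have huP : u ∉ pH.support := by
    rw [hpsup]
    simp only [List.mem_map, not_exists, not_and]
    intro s hs
    exact hvalu s hs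
  have hvP : v ∉ pH.support := by
    rw [hpsup]
    simp only [List.mem_map, not_exists, not_and]
    intro s _
    exact s.prop
  have hcntP : ∀ t : V, t ≠ u → t ≠ v → pH.support.count t = 1 := by
    intro t htu htv
    have ht : t = ((⟨t, htv⟩ : {z : V // z ≠ v}) : V) := rfl
    rw [hpsup, ht, List.count_map_of_injective _ _ Subtype.val_injective, hp0cnt, hcnt]
    intro hh
    exact htu ((congrArg Subtype.val hh).trans hwu)
  have hnodupP : pH.support.Nodup := by
    refine List.nodup_iff_count_le_one.mpr (fun t => ?_)
    by_cases h1 : t = u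
    · simp [h1, List.count_eq_zero.mpr huP]
    by_cases h2 : t = v
    · simp [h2, List.count_eq_zero.mpr hvP]
    · rw [hcntP t h1 h2]
  have hz₂u : (z₂ : V) ≠ u := by
    intro h
    exact hwp0 ((Subtype.ext (h.trans hwu.symm) : z₂ = w) ▸ p0.end_mem_support)
  have hz₁v : (z₁ : V) ≠ v := z₁.prop
  -- the candidate Hamiltonian cycle of H
  have hrsup : (pH.append (Walk.cons hz₂.symm (Walk.cons he.symm Walk.nil))).support
      = pH.support ++ [v, u] := by
    simp [SimpleGraph.Walk.support_append]
  have hredg : (pH.append (Walk.cons hz₂.symm (Walk.cons he.symm Walk.nil))).edges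
      = pH.edges ++ [s((z₂ : V), v), s(v, u)] := by
    simp [SimpleGraph.Walk.edges_append]
  refine ⟨Walk.cons hz₁ (pH.append (Walk.cons hz₂.symm (Walk.cons he.symm Walk.nil))),
    ?_, ?_, ?_⟩
  · rw [SimpleGraph.Walk.isHamiltonianCycle_iff_isCycle_and_support_count_tail_eq_one]
    constructor
    · rw [SimpleGraph.Walk.cons_isCycle_iff]
      constructor
      · rw [SimpleGraph.Walk.isPath_def, hrsup]
        refine List.Nodup.append hnodupP (by simp [he.ne']) ?_
        intro t htP htQ
        simp only [List.mem_cons, List.mem_singleton, List.not_mem_nil, or_false] at htQ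
        rcases htQ with rfl | rfl
        · exact hvP htP
        · exact huP htP
      · rw [hredg]
        intro hmem
        rcases List.mem_append.mp hmem with hmem | hmem
        · exact huP (pH.fst_mem_support_of_mem_edges hmem)
        · simp only [List.mem_cons, List.mem_singleton, List.not_mem_nil, or_false] at hmem
          rcases hmem with hmem | hmem <;>
            rcases Sym2.eq_iff.mp hmem with ⟨h1, h2⟩ | ⟨h1, h2⟩ <;>
            first
              | exact he.ne h1 | exact he.ne h1.symm
              | exact he.ne h2 | exact he.ne h2.symm
              | exact hz₁v h1 | exact hz₁v h1.symm
              | exact hz₁v h2 | exact hz₁v h2.symm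
              | exact hz₂u h1 | exact hz₂u h1.symm
              | exact hz₂u h2 | exact hz₂u h2.symm
    · intro t
      rw [SimpleGraph.Walk.support_cons, List.tail_cons, hrsup, List.count_append]
      by_cases h1 : t = v
      · subst h1
        rw [List.count_eq_zero.mpr hvP]
        simp [he.ne']
      by_cases h2 : t = u
      · subst h2
        rw [List.count_eq_zero.mpr huP]
        simp [he.ne, he.ne']
      · rw [hcntP t h2 h1]
        simp [h1, h2, Ne.symm h1, Ne.symm h2]
  · rw [SimpleGraph.Walk.edges_cons, hredg]
    refine List.mem_cons_of_mem _ (List.mem_append_right _ ?_)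
    simp [Sym2.eq_iff]
  · have hcm : ∀ a : {z : V // z ≠ v}, contractMap u v he.ne ↑a = a := by
      intro a
      simp [contractMap, a.prop]
    have hcmu : contractMap u v he.ne u = w := by
      refine Subtype.ext ?_
      simp [contractMap, he.ne]
      exact hwu.symm
    have hcmv : contractMap u v he.ne v = w := by
      refine Subtype.ext ?_
      simp [contractMap]
      exact hwu.symm
    have hnot : s(u, v) ∉ (s(u, (z₁ : V)) :: (pH.edges ++ [s((z₂ : V), v)])) := by
      intro hmem
      rcases List.mem_cons.mp hmem with hmem | hmem
      · rcases Sym2.eq_iff.mp hmem with ⟨h1, h2⟩ | ⟨h1, h2⟩ <;>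
          first
            | exact he.ne h1 | exact he.ne h1.symm
            | exact he.ne h2 | exact he.ne h2.symm
            | exact hz₁v h1 | exact hz₁v h1.symm
            | exact hz₁v h2 | exact hz₁v h2.symm
      rcases List.mem_append.mp hmem with hmem | hmem
      · exact hvP (pH.snd_mem_support_of_mem_edges hmem)
      · simp only [List.mem_singleton] at hmem
        rcases Sym2.eq_iff.mp hmem with ⟨h1, h2⟩ | ⟨h1, h2⟩ <;>
          first
            | exact he.ne h1 | exact he.ne h1.symm
            | exact he.ne h2 | exact he.ne h2.symm
            | exact hz₂u h1 | exact hz₂u h1.symm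
            | exact hz₂u h2 | exact hz₂u h2.symm
    have herase : (Walk.cons hz₁
        (pH.append (Walk.cons hz₂.symm (Walk.cons he.symm Walk.nil)))).edges.erase s(u, v)
        = s(u, (z₁ : V)) :: (pH.edges ++ [s((z₂ : V), v)]) := by
      rw [SimpleGraph.Walk.edges_cons, hredg]
      have hsplit2 : s(u, (z₁ : V)) :: (pH.edges ++ [s((z₂ : V), v), s(v, u)])
          = (s(u, (z₁ : V)) :: (pH.edges ++ [s((z₂ : V), v)])) ++ [s(v, u)] := by
        simp
      rw [hsplit2, List.erase_append_right _ hnot,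
        show s(v, u) = s(u, v) from Sym2.eq_swap]
      simp
    rw [herase]
    have hmap : (s(u, (z₁ : V)) :: (pH.edges ++ [s((z₂ : V), v)])).map
        (Sym2.map (contractMap u v he.ne)) = s(w, z₁) :: (p0.edges ++ [s(z₂, w)]) := by
      have hcomp : contractMap u v he.ne ∘ Subtype.val = id := funext hcm
      rw [List.map_cons, List.map_append, hpedg, List.map_map]
      congr 1
      · rw [Sym2.map_pair_eq, hcmu, hcm]
      congr 1
      · have h4 : ∀ e : Sym2 {z : V // z ≠ v},
            Sym2.map (contractMap u v he.ne) (Sym2.map Subtype.val e) = e := by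
          intro e
          induction e using Sym2.ind with
          | _ a b => simp only [Sym2.map_pair_eq, hcm]
        rw [show Sym2.map (contractMap u v he.ne) ∘ Sym2.map (Subtype.val) = id from
          funext h4, List.map_id]
      · simp only [List.map_singleton, Sym2.map_pair_eq, hcm, hcmv]
    rw [hmap]
    exact hp0perm

theorem hamiltonianCycle_of_contractEdge_hamiltonianCycle {V : Type*} [Fintype V]
    [DecidableEq V] (H : SimpleGraph V) (hn : 4 ≤ Fintype.card V)
    (u v : V) (he : H.Adj u v)
    (c : (H.contractEdge u v).Walk ⟨u, he.ne⟩ ⟨u, he.ne⟩)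
    (hc : c.IsHamiltonianCycle)
    -- at the merged vertex, `c` uses exactly one edge arising from a `u`-edge of `H`
    -- and exactly one edge arising from a `v`-edge of `H`
    (z₁ z₂ : {z : V // z ≠ v}) (hz : z₁ ≠ z₂)
    (hz₁ : H.Adj u ↑z₁) (hz₂ : H.Adj v ↑z₂)
    (hsplit : (c.edges.filter (fun e' => (⟨u, he.ne⟩ : {z : V // z ≠ v}) ∈ e')).Perm
      [s((⟨u, he.ne⟩ : {z : V // z ≠ v}), z₁), s((⟨u, he.ne⟩ : {z : V // z ≠ v}), z₂)]) :
    ∃ cH : H.Walk u u, cH.IsHamiltonianCycle ∧ s(u, v) ∈ cH.edges ∧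
      ((cH.edges.erase s(u, v)).map (Sym2.map (contractMap u v he.ne))).Perm c.edges :=
  main_aux H u v he ⟨u, he.ne⟩ rfl c hc z₁ z₂ hz hz₁ hz₂ hsplit
end

section
/- In the graph G' obtained from a finite simple graph G (with n vertices, n ≥ 2) by deleting a vertex x and attaching to each former neighbor x' of x a fresh clique of n−1 new vertices (joined completely to x' and to each other), every clique of size n in G' consists of exactly one old vertex together with its attached n−1 fresh vertices. -/
/-- The graph obtained from `G` by deleting the vertex `x` and attaching to each former
neighbor `x'` of `x` a fresh clique of `n - 1` new vertices, pairwise adjacent and each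
adjacent to `x'` (and to nothing else). -/
def attachAll {V : Type*} (G : SimpleGraph V) (x : V) (n : ℕ) :
    SimpleGraph ({z : V // z ≠ x} ⊕ (G.neighborSet x × Fin (n - 1))) where
  Adj a b :=
    match a, b with
    | .inl a, .inl b => G.Adj ↑a ↑b
    | .inl a, .inr (w, _) => (↑a : V) = ↑w
    | .inr (w, _), .inl b => (↑b : V) = ↑w
    | .inr (w, i), .inr (w', j) => w = w' ∧ i ≠ j
  symm := by
    constructor
    rintro (a | ⟨w, i⟩) (b | ⟨w', j⟩) h
    · exact G.adj_symm h
    · exact h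
    · exact h
    · exact ⟨h.1.symm, h.2.symm⟩
  loopless := by
    constructor
    rintro (a | ⟨w, i⟩) h
    · exact G.irrefl h
    · exact h.2 rfl

theorem attachAll_nclique_structure {V : Type*} [Fintype V] (n : ℕ) (hn : 2 ≤ n)
    (G : SimpleGraph V) (hcard : Fintype.card V = n) (x : V)
    (s : Set ({z : V // z ≠ x} ⊕ (G.neighborSet x × Fin (n - 1))))
    (hclique : (attachAll G x n).IsClique s) (hsize : s.ncard = n) :
    ∃ (w : V) (hadj : G.Adj x w),
      s = insert (Sum.inl ⟨w, hadj.ne'⟩)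
        (Set.range fun i : Fin (n - 1) => Sum.inr (⟨w, hadj⟩, i)) := by
  classical
  obtain ⟨w0, i0, hmem⟩ : ∃ w i, Sum.inr (w, i) ∈ s := by
    by_contra h
    push_neg at h
    have hsub : s ⊆ Set.range (Sum.inl :
        {z : V // z ≠ x} → ({z : V // z ≠ x} ⊕ (G.neighborSet x × Fin (n - 1)))) := by
      rintro (a | ⟨w, i⟩) ha
      · exact ⟨a, rfl⟩
      · exact absurd ha (h w i)
    have hle : s.ncard ≤ (Set.range (Sum.inl :
        {z : V // z ≠ x} → ({z : V // z ≠ x} ⊕ (G.neighborSet x × Fin (n - 1))))).ncard :=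
      Set.ncard_le_ncard hsub (Set.toFinite _)
    have hr : (Set.range (Sum.inl :
        {z : V // z ≠ x} → ({z : V // z ≠ x} ⊕ (G.neighborSet x × Fin (n - 1))))).ncard
        = n - 1 := by
      rw [← Nat.card_coe_set_eq, Nat.card_range_of_injective Sum.inl_injective,
        Nat.card_eq_fintype_card]
      have : Fintype.card {z : V // z ≠ x} = Fintype.card V - 1 := by
        simp [Fintype.card_subtype_compl]
      omega
    omega
  have hadj : G.Adj x ↑w0 := w0.2
  refine ⟨↑w0, hadj, ?_⟩
  have hw0 : (⟨↑w0, hadj⟩ : G.neighborSet x) = w0 := rfl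
  set t : Set ({z : V // z ≠ x} ⊕ (G.neighborSet x × Fin (n - 1))) :=
    insert (Sum.inl ⟨↑w0, hadj.ne'⟩)
      (Set.range fun i : Fin (n - 1) => Sum.inr (⟨↑w0, hadj⟩, i)) with ht
  have hsub : s ⊆ t := by
    rintro (a | ⟨w, i⟩) ha
    · have hne : (Sum.inl a : {z : V // z ≠ x} ⊕ (G.neighborSet x × Fin (n - 1)))
          ≠ Sum.inr (w0, i0) := by simp
      have hadj' := hclique ha hmem hne
      have : (↑a : V) = ↑w0 := hadj'
      exact Or.inl (congrArg Sum.inl (Subtype.ext this))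
    · rcases eq_or_ne w w0 with hw | hw
      · exact Or.inr ⟨i, by rw [hw0, hw]⟩
      · have hne : (Sum.inr (w, i) : {z : V // z ≠ x} ⊕ (G.neighborSet x × Fin (n - 1)))
            ≠ Sum.inr (w0, i0) := by
          simp only [ne_eq, Sum.inr.injEq, Prod.mk.injEq, not_and]
          intro hww; exact absurd hww hw
        have hadj' := hclique ha hmem hne
        exact absurd hadj'.1 hw
  have hinj : Function.Injective (fun i : Fin (n - 1) =>
      (Sum.inr (⟨↑w0, hadj⟩, i) : {z : V // z ≠ x} ⊕ (G.neighborSet x × Fin (n - 1)))) := by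
    intro i j hij
    simpa using hij
  have hrange : (Set.range fun i : Fin (n - 1) =>
      (Sum.inr (⟨↑w0, hadj⟩, i) : {z : V // z ≠ x} ⊕ (G.neighborSet x × Fin (n - 1)))).ncard
      = n - 1 := by
    rw [← Nat.card_coe_set_eq, Nat.card_range_of_injective hinj,
      Nat.card_eq_fintype_card, Fintype.card_fin]
  have hnotmem : (Sum.inl ⟨↑w0, hadj.ne'⟩ : {z : V // z ≠ x} ⊕ (G.neighborSet x × Fin (n - 1)))
      ∉ Set.range fun i : Fin (n - 1) => Sum.inr ((⟨↑w0, hadj⟩ : G.neighborSet x), i) := by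
    simp
  have htcard : t.ncard = n := by
    rw [ht, Set.ncard_insert_of_notMem hnotmem (Set.toFinite _), hrange]
    omega
  exact Set.eq_of_subset_of_ncard_le hsub (by omega) (Set.toFinite t)
end
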